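/- Let G, R, K be n×n complex matrices with K invertible, ρ(G)ρ(R) < 1, W = Σ_{i=0}^∞ GⁱK⁻¹Rⁱ, and suppose Gu = ξu with u ≠ 0, Q = uvᵀ with vᵀu = 1. Setting G_r = G - ξQ, the series W_r = Σ_{i=0}^∞ G_rⁱ K⁻¹ Rⁱ converges and W_r = W - ξ Q W R. -/

import Mathlib

open Matrix

/-- The spectral radius of a complex matrix: the supremum of the moduli of its eigenvalues. -/
noncomputable def specRad {n : ℕ} (A : Matrix (Fin n) (Fin n) ℂ) : ℝ :=
  ⨆ μ ∈ spectrum ℂ A, ‖μ‖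

section Aux

attribute [local instance] Matrix.linftyOpNormedRing Matrix.linftyOpNormedAlgebra

open Filter Topology ENNReal

lemma specRad_nonneg {n : ℕ} (A : Matrix (Fin n) (Fin n) ℂ) : 0 ≤ specRad A :=
  Real.iSup_nonneg fun _ => Real.iSup_nonneg fun _ => norm_nonneg _

lemma spectralRadius_le_ofReal_specRad {n : ℕ} [Nonempty (Fin n)]
    (A : Matrix (Fin n) (Fin n) ℂ) :
    spectralRadius ℂ A ≤ ENNReal.ofReal (specRad A) := by
  rw [spectralRadius]
  refine iSup₂_le fun μ hμ => ?_
  rw [show ((‖μ‖₊ : NNReal) : ℝ≥0∞) = ENNReal.ofReal ‖μ‖ by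
    rw [← ENNReal.ofReal_coe_nnreal, coe_nnnorm]]
  refine ENNReal.ofReal_le_ofReal ?_
  -- ‖μ‖ ≤ specRad A
  have hb : ∀ ν ∈ spectrum ℂ A, ‖ν‖ ≤ ‖A‖ := fun ν hν => spectrum.norm_le_norm_of_mem hν
  have hbdd : BddAbove (Set.range fun ν => ⨆ _ : ν ∈ spectrum ℂ A, ‖ν‖) := by
    refine ⟨max ‖A‖ 0, ?_⟩
    rintro x ⟨ν, rfl⟩
    by_cases hν : ν ∈ spectrum ℂ A
    · simp only [ciSup_pos hν]
      exact le_max_of_le_left (hb ν hν)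
    · simp [hν, Real.iSup_of_isEmpty]
  calc ‖μ‖ = ⨆ _ : μ ∈ spectrum ℂ A, ‖μ‖ := (ciSup_pos (f := fun _ => ‖μ‖) hμ).symm
    _ ≤ specRad A := le_ciSup hbdd μ

lemma summable_aux {n : ℕ} [Nonempty (Fin n)] (G R K' : Matrix (Fin n) (Fin n) ℂ)
    (hρ : specRad G * specRad R < 1) :
    Summable (fun i : ℕ => G ^ i * K' * R ^ i) := by
  have hG := spectralRadius_le_ofReal_specRad G
  have hR := spectralRadius_le_ofReal_specRad R
  have hlt : spectralRadius ℂ G * spectralRadius ℂ R < 1 := by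
    calc spectralRadius ℂ G * spectralRadius ℂ R
        ≤ ENNReal.ofReal (specRad G) * ENNReal.ofReal (specRad R) :=
          mul_le_mul' hG hR
      _ = ENNReal.ofReal (specRad G * specRad R) :=
          (ENNReal.ofReal_mul (specRad_nonneg G)).symm
      _ < 1 := ENNReal.ofReal_lt_one.mpr hρ
  have hGfin : spectralRadius ℂ G ≠ ⊤ := (hG.trans_lt ENNReal.ofReal_lt_top).ne
  have hRfin : spectralRadius ℂ R ≠ ⊤ := (hR.trans_lt ENNReal.ofReal_lt_top).ne
  have hGt := spectrum.pow_nnnorm_pow_one_div_tendsto_nhds_spectralRadius G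
  have hRt := spectrum.pow_nnnorm_pow_one_div_tendsto_nhds_spectralRadius R
  have hmul : Tendsto
      (fun i : ℕ => (‖G ^ i‖₊ : ℝ≥0∞) ^ (1 / (i : ℝ)) * (‖R ^ i‖₊ : ℝ≥0∞) ^ (1 / (i : ℝ)))
      atTop (𝓝 (spectralRadius ℂ G * spectralRadius ℂ R)) :=
    ENNReal.Tendsto.mul hGt (Or.inr hRfin) hRt (Or.inr hGfin)
  obtain ⟨r, hr1, hr2⟩ := exists_between hlt
  have hrtop : r ≠ ⊤ := hr2.ne_top
  have hev : ∀ᶠ i : ℕ in atTop,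
      (‖G ^ i‖₊ : ℝ≥0∞) ^ (1 / (i : ℝ)) * (‖R ^ i‖₊ : ℝ≥0∞) ^ (1 / (i : ℝ)) < r :=
    hmul.eventually_lt_const hr1
  set t : ℝ := r.toReal with ht
  have ht1 : t < 1 := by
    rw [ht, ← ENNReal.toReal_one]
    exact ENNReal.toReal_strict_mono ENNReal.one_ne_top hr2
  have ht0 : 0 ≤ t := ENNReal.toReal_nonneg
  have hgeo : Summable (fun i : ℕ => ‖K'‖ * t ^ i) :=
    (summable_geometric_of_lt_one ht0 ht1).mul_left _
  refine Summable.of_norm_bounded_eventually_nat hgeo ?_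
  filter_upwards [hev, eventually_ge_atTop 1] with i hi hi1
  have hipos : (0:ℝ) < i := by exact_mod_cast hi1
  have key : (‖G ^ i‖₊ * ‖R ^ i‖₊ : ℝ≥0∞) ≤ r ^ (i : ℕ) := by
    have h1 : ((‖G ^ i‖₊ * ‖R ^ i‖₊ : ℝ≥0∞)) ^ (1 / (i : ℝ)) < r := by
      rw [ENNReal.mul_rpow_of_nonneg _ _ (by positivity)]
      exact hi
    have hx : (‖G ^ i‖₊ * ‖R ^ i‖₊ : ℝ≥0∞)
        = (((‖G ^ i‖₊ * ‖R ^ i‖₊ : ℝ≥0∞)) ^ (1 / (i : ℝ))) ^ (i : ℝ) := by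
      rw [← ENNReal.rpow_mul, one_div_mul_cancel hipos.ne', ENNReal.rpow_one]
    rw [hx, ← ENNReal.rpow_natCast r i]
    exact ENNReal.rpow_le_rpow h1.le hipos.le
  have key' : ‖G ^ i‖ * ‖R ^ i‖ ≤ t ^ i := by
    have := ENNReal.toReal_mono (by simp [hrtop, ENNReal.pow_ne_top]) key
    rwa [ENNReal.toReal_mul, ENNReal.toReal_pow, coe_toReal, coe_toReal] at this
  calc ‖G ^ i * K' * R ^ i‖ ≤ ‖G ^ i‖ * ‖K'‖ * ‖R ^ i‖ :=
        le_trans (norm_mul_le _ _)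
          (mul_le_mul_of_nonneg_right (norm_mul_le _ _) (norm_nonneg _))
    _ = ‖K'‖ * (‖G ^ i‖ * ‖R ^ i‖) := by ring
    _ ≤ ‖K'‖ * t ^ i := mul_le_mul_of_nonneg_left key' (norm_nonneg _)

end Aux

/-- With `G_r = G - ξQ`, `Q = uvᵀ`, `Gu = ξu`, `vᵀu = 1`, the series
`W_r = Σ G_rⁱK⁻¹Rⁱ` converges and `W_r = W - ξQWR` where `W = Σ GⁱK⁻¹Rⁱ`. -/
theorem shifted_series {n : ℕ} (G R K : Matrix (Fin n) (Fin n) ℂ) (hK : IsUnit K)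
    (hρ : specRad G * specRad R < 1)
    (ξ : ℂ) (u v : Fin n → ℂ) (hu : u ≠ 0) (hGu : G.mulVec u = ξ • u)
    (huv : v ⬝ᵥ u = 1) :
    Summable (fun i : ℕ => (G - ξ • vecMulVec u v) ^ i * K⁻¹ * R ^ i) ∧
    (∑' i : ℕ, (G - ξ • vecMulVec u v) ^ i * K⁻¹ * R ^ i)
      = (∑' i : ℕ, G ^ i * K⁻¹ * R ^ i)
        - ξ • (vecMulVec u v * (∑' i : ℕ, G ^ i * K⁻¹ * R ^ i) * R) := by
  rcases Nat.eq_zero_or_pos n with hn | hn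
  · subst hn
    haveI : Subsingleton (Matrix (Fin 0) (Fin 0) ℂ) :=
      ⟨fun a b => by ext i j; exact i.elim0⟩
    constructor
    · have he : (fun i : ℕ => (G - ξ • vecMulVec u v) ^ i * K⁻¹ * R ^ i)
          = fun _ => (0 : Matrix (Fin 0) (Fin 0) ℂ) :=
        funext fun i => Subsingleton.elim _ _
      rw [he]; exact summable_zero
    · exact Subsingleton.elim _ _
  haveI : Nonempty (Fin n) := ⟨⟨0, hn⟩⟩
  set Q : Matrix (Fin n) (Fin n) ℂ := vecMulVec u v with hQ
  have hQ2 : Q * Q = Q := by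
    ext i j
    simp only [hQ, mul_apply, vecMulVec_apply]
    calc ∑ k, u i * v k * (u k * v j) = (∑ k, v k * u k) * (u i * v j) := by
          rw [Finset.sum_mul]; congr 1; ext k; ring
      _ = u i * v j := by
          rw [show (∑ k, v k * u k) = v ⬝ᵥ u from rfl, huv, one_mul]
  have hGQ : G * Q = ξ • Q := by
    ext i j
    have hi := congrFun hGu i
    simp only [mulVec, dotProduct, Pi.smul_apply, smul_eq_mul] at hi
    simp only [hQ, mul_apply, vecMulVec_apply, Matrix.smul_apply, smul_eq_mul]
    calc ∑ k, G i k * (u k * v j) = (∑ k, G i k * u k) * v j := by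
          rw [Finset.sum_mul]; congr 1; ext k; ring
      _ = ξ * (u i * v j) := by rw [hi]; ring
  have hpow : ∀ i : ℕ, (G - ξ • Q) ^ (i + 1) = G ^ (i + 1) - ξ • (Q * G ^ i) := by
    intro i
    induction i with
    | zero => simp
    | succ j ih =>
      have e1 : G * (Q * G ^ j) = ξ • (Q * G ^ j) := by
        rw [← mul_assoc, hGQ, smul_mul_assoc]
      have e2 : Q * (Q * G ^ j) = Q * G ^ j := by
        rw [← mul_assoc, hQ2]
      calc (G - ξ • Q) ^ (j + 2) = (G - ξ • Q) * (G ^ (j + 1) - ξ • (Q * G ^ j)) := by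
            rw [pow_succ' (G - ξ • Q) (j + 1), ih]
        _ = G * G ^ (j + 1) - ξ • (G * (Q * G ^ j)) - ξ • (Q * G ^ (j + 1))
              + (ξ * ξ) • (Q * (Q * G ^ j)) := by
            simp only [mul_sub, sub_mul, smul_mul_assoc, mul_smul_comm, smul_sub,
              smul_smul]
            module
        _ = G ^ (j + 2) - ξ • (Q * G ^ (j + 1)) := by
            rw [e1, e2, ← pow_succ', smul_smul]
            module
  set f : ℕ → Matrix (Fin n) (Fin n) ℂ := fun i => G ^ i * K⁻¹ * R ^ i with hf
  have hfsum : Summable f := summable_aux G R K⁻¹ hρ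
  set g : ℕ → Matrix (Fin n) (Fin n) ℂ := fun i =>
    match i with
    | 0 => 0
    | (j + 1) => ξ • (Q * f j * R) with hg
  have hg0 : g 0 = 0 := rfl
  have hgs : ∀ j, g (j + 1) = ξ • (Q * f j * R) := fun j => rfl
  have hterm : ∀ i : ℕ, (G - ξ • Q) ^ i * K⁻¹ * R ^ i = f i - g i := by
    intro i
    match i with
    | 0 => simp [hf, hg0]
    | (j + 1) =>
      rw [hpow j, hgs j]
      simp only [hf, sub_mul, smul_mul_assoc]
      congr 2
      rw [pow_succ]
      simp only [mul_assoc]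
  have htail : Summable (fun j : ℕ => g (j + 1)) := by
    have : Summable (fun j : ℕ => ξ • (Q * f j * R)) :=
      (((hfsum.mul_left Q).mul_right R).const_smul ξ)
    simpa only [hgs] using this
  have hgsum : Summable g := (summable_nat_add_iff 1).mp htail
  have hsum : Summable (fun i : ℕ => (G - ξ • Q) ^ i * K⁻¹ * R ^ i) := by
    rw [funext hterm]
    exact hfsum.sub hgsum
  refine ⟨hsum, ?_⟩
  calc (∑' i : ℕ, (G - ξ • Q) ^ i * K⁻¹ * R ^ i) = ∑' i : ℕ, (f i - g i) := by
        rw [funext hterm]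
    _ = (∑' i : ℕ, f i) - ∑' i : ℕ, g i := hfsum.tsum_sub hgsum
    _ = (∑' i : ℕ, f i) - ξ • (Q * (∑' i : ℕ, f i) * R) := by
        congr 1
        rw [hgsum.tsum_eq_zero_add, hg0, zero_add]
        calc (∑' j : ℕ, g (j + 1)) = ∑' j : ℕ, ξ • (Q * f j * R) := by
              simp only [hgs]
          _ = ξ • (Q * (∑' i : ℕ, f i) * R) := by
              rw [((hfsum.mul_left Q).mul_right R).tsum_const_smul ξ,
                (hfsum.mul_left Q).tsum_mul_right R, hfsum.tsum_mul_left Q]
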